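/- Let m₁ be a function ℕ → ℂ∖{0} of Gevrey growth type s₁+s̃₁ (i.e., c^j Γ_{s₁+s̃₁}(j) ≤ |m₁(j)| ≤ C^j Γ_{s₁+s̃₁}(j)), let λ ∈ ℂ, β ≥ 1, and let ĥ(t) = Σ_{j≥0} (h_j/m₁(j)) t^j be a formal power series with coefficients h_j in a Banach space E satisfying ‖h_j‖ ≤ A B^j Γ_{σ}(j) for some constants A, B and some σ ∈ ℝ. Suppose additionally that a sequence of 'pseudodifferential iterates' L^k h_j satisfies ‖L^k h_j‖ ≤ A' (B')^{j+k} Γ_{ρ}(k) Γ_{σ}(j) for constants A', B' and some ρ ≥ 0. Then the formal series v̂(t) = Σ_{j≥β} (t^j/m₁(j)) Σ_{k=β−1}^{j−1} C(k,β−1) L^{k−β+1} h_{j−k−1} has coefficients v_j := Σ_{k=β−1}^{j−1} C(k,β−1) L^{k−β+1} h_{j−k−1} satisfying ‖v_j‖ ≤ A'' (B'')^j Γ_{max{ρ,σ}}(j) for some constants A'', B''. -/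

import Mathlib

noncomputable def GammaS (s : ℝ) (n : ℕ) : ℝ :=
  if 0 ≤ s then Real.Gamma (1 + s * n) else (Real.Gamma (1 - s * n))⁻¹

section Aux

open Real

lemma aux_choose_le_two_pow (n k : ℕ) : n.choose k ≤ 2 ^ n := by
  rcases le_or_gt k n with hk | hk
  · calc n.choose k ≤ ∑ i ∈ Finset.range (n + 1), n.choose i :=
        Finset.single_le_sum (fun i _ => Nat.zero_le _)
          (Finset.mem_range.mpr (Nat.lt_succ_of_le hk))
    _ = 2 ^ n := Nat.sum_range_choose n
  · rw [Nat.choose_eq_zero_of_lt hk]; exact Nat.zero_le _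

lemma aux_gamma_one_le_of_le_two {x : ℝ} (h1 : 1 ≤ x) (h2 : x ≤ 2) :
    Real.Gamma x ≤ 1 := by
  have := Real.convexOn_Gamma.le_on_segment (x := (1:ℝ)) (y := (2:ℝ))
    (by norm_num : (1:ℝ) ∈ Set.Ioi (0:ℝ)) (by norm_num : (2:ℝ) ∈ Set.Ioi (0:ℝ))
    (z := x) ?_
  · simpa [Real.Gamma_one, Real.Gamma_two] using this
  · rw [segment_eq_Icc (by norm_num : (1:ℝ) ≤ 2)]
    exact ⟨h1, h2⟩

lemma aux_gamma_mono {x y : ℝ} (hx : 2 ≤ x) (hxy : x ≤ y) :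
    Real.Gamma x ≤ Real.Gamma y :=
  Real.Gamma_strictMonoOn_Ici.monotoneOn (Set.mem_Ici.mpr hx)
    (Set.mem_Ici.mpr (hx.trans hxy)) hxy

lemma aux_half_le_gamma {x : ℝ} (hx : 1 ≤ x) : (1/2 : ℝ) ≤ Real.Gamma x := by
  rcases le_or_gt 2 x with h2 | h2
  · have : Real.Gamma 2 ≤ Real.Gamma x := aux_gamma_mono le_rfl h2
    rw [Real.Gamma_two] at this; linarith
  · have hx0 : x ≠ 0 := by positivity
    have hadd : Real.Gamma (x + 1) = x * Real.Gamma x := Real.Gamma_add_one hx0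
    have h21 : Real.Gamma 2 ≤ Real.Gamma (x + 1) := aux_gamma_mono le_rfl (by linarith)
    rw [Real.Gamma_two] at h21
    have hxpos : (0:ℝ) < x := by linarith
    nlinarith [hadd]

/-- `Γ x ≤ 2 Γ y` for `1 ≤ x ≤ y`. -/
lemma aux_gamma_le_two_mul {x y : ℝ} (h1 : 1 ≤ x) (hxy : x ≤ y) :
    Real.Gamma x ≤ 2 * Real.Gamma y := by
  rcases le_or_gt 2 x with h2 | h2
  · have : Real.Gamma x ≤ Real.Gamma y := aux_gamma_mono h2 hxy
    have hy : 0 < Real.Gamma y := Real.Gamma_pos_of_pos (by linarith)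
    linarith
  · have hxle1 : Real.Gamma x ≤ 1 := aux_gamma_one_le_of_le_two h1 (le_of_lt h2)
    have hy : (1/2 : ℝ) ≤ Real.Gamma y := aux_half_le_gamma (le_trans h1 hxy)
    linarith

/-- Supermultiplicativity: `Γ(1+x) Γ(1+y) ≤ Γ(1+x+y)` for `x, y ≥ 0`. -/
lemma aux_gamma_supermult {x y : ℝ} (hx : 0 ≤ x) (hy : 0 ≤ y) :
    Real.Gamma (1 + x) * Real.Gamma (1 + y) ≤ Real.Gamma (1 + x + y) := by
  rcases eq_or_lt_of_le hx with hx0 | hx0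
  · rw [← hx0]; simp [Real.Gamma_one]
  rcases eq_or_lt_of_le hy with hy0 | hy0
  · rw [← hy0]; simp [Real.Gamma_one]
  have hspos : 0 < x + y := by positivity
  have hmem1 : (1:ℝ) ∈ Set.Ioi (0:ℝ) := by norm_num
  have hmems : (1 + (x + y) : ℝ) ∈ Set.Ioi (0:ℝ) := by
    simp only [Set.mem_Ioi]; linarith
  have key : ∀ a b : ℝ, 0 ≤ a → 0 ≤ b → a + b = 1 →
      (Real.log ∘ Real.Gamma) (a * 1 + b * (1 + (x + y))) ≤
        b * (Real.log ∘ Real.Gamma) (1 + (x + y)) := by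
    intro a b ha hb hab
    have := Real.convexOn_log_Gamma.2 hmem1 hmems ha hb hab
    simpa [Real.Gamma_one, smul_eq_mul] using this
  have h1 : Real.log (Real.Gamma (1 + x)) ≤
      (x / (x + y)) * Real.log (Real.Gamma (1 + (x + y))) := by
    have := key (y / (x + y)) (x / (x + y)) (by positivity) (by positivity)
      (by field_simp; ring)
    have harg : (y / (x + y)) * 1 + (x / (x + y)) * (1 + (x + y)) = 1 + x := by
      field_simp; ring
    rw [harg] at this
    simpa using this
  have h2 : Real.log (Real.Gamma (1 + y)) ≤
      (y / (x + y)) * Real.log (Real.Gamma (1 + (x + y))) := by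
    have := key (x / (x + y)) (y / (x + y)) (by positivity) (by positivity)
      (by field_simp)
    have harg : (x / (x + y)) * 1 + (y / (x + y)) * (1 + (x + y)) = 1 + y := by
      field_simp; ring
    rw [harg] at this
    simpa using this
  have hgx : 0 < Real.Gamma (1 + x) := Real.Gamma_pos_of_pos (by linarith)
  have hgy : 0 < Real.Gamma (1 + y) := Real.Gamma_pos_of_pos (by linarith)
  have hgs : 0 < Real.Gamma (1 + (x + y)) := Real.Gamma_pos_of_pos (by linarith)
  have hlog : Real.log (Real.Gamma (1 + x) * Real.Gamma (1 + y)) ≤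
      Real.log (Real.Gamma (1 + (x + y))) := by
    rw [Real.log_mul (ne_of_gt hgx) (ne_of_gt hgy)]
    have hsum : (x / (x + y)) + (y / (x + y)) = 1 := by field_simp
    calc Real.log (Real.Gamma (1 + x)) + Real.log (Real.Gamma (1 + y))
        ≤ (x / (x + y)) * Real.log (Real.Gamma (1 + (x + y))) +
          (y / (x + y)) * Real.log (Real.Gamma (1 + (x + y))) := add_le_add h1 h2
      _ = Real.log (Real.Gamma (1 + (x + y))) := by rw [← add_mul, hsum, one_mul]
  have hfin := (Real.log_le_log_iff (by positivity) hgs).mp hlog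
  calc Real.Gamma (1 + x) * Real.Gamma (1 + y) ≤ Real.Gamma (1 + (x + y)) := hfin
    _ = Real.Gamma (1 + x + y) := by rw [add_assoc]

lemma GammaS_pos (s : ℝ) (n : ℕ) : 0 < GammaS s n := by
  unfold GammaS
  split_ifs with hs
  · exact Real.Gamma_pos_of_pos (by positivity)
  · push_neg at hs
    have : 0 < Real.Gamma (1 - s * n) :=
      Real.Gamma_pos_of_pos (by nlinarith [Nat.cast_nonneg (α := ℝ) n])
    positivity

/-- Key combinatorial Gamma estimate. -/
lemma aux_key {ρ σ : ℝ} (hρ : 0 ≤ ρ) (a b j : ℕ) (ha : a ≤ j) (hab : a + b ≤ j) :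
    GammaS ρ a * GammaS σ b ≤ 8 * GammaS (max ρ σ) j := by
  set τ := max ρ σ with hτdef
  have hτ : 0 ≤ τ := le_trans hρ (le_max_left _ _)
  have hρτ : ρ ≤ τ := le_max_left _ _
  have hGτj : GammaS τ j = Real.Gamma (1 + τ * j) := by unfold GammaS; rw [if_pos hτ]
  have hGρa : GammaS ρ a = Real.Gamma (1 + ρ * a) := by unfold GammaS; rw [if_pos hρ]
  have haj : (a : ℝ) ≤ j := Nat.cast_le.mpr ha
  have hbnn : (0:ℝ) ≤ (b:ℝ) := Nat.cast_nonneg b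
  have hann : (0:ℝ) ≤ (a:ℝ) := Nat.cast_nonneg a
  have hab' : (a : ℝ) + b ≤ j := by
    have : ((a + b : ℕ) : ℝ) ≤ (j : ℕ) := Nat.cast_le.mpr hab
    push_cast at this; linarith
  have hgτj : (0:ℝ) < Real.Gamma (1 + τ * j) := Real.Gamma_pos_of_pos (by positivity)
  rcases le_or_gt 0 σ with hσ | hσ
  · -- σ ≥ 0
    have hστ : σ ≤ τ := le_max_right _ _
    have hGσb : GammaS σ b = Real.Gamma (1 + σ * b) := by unfold GammaS; rw [if_pos hσ]
    have e1 : Real.Gamma (1 + ρ * a) ≤ 2 * Real.Gamma (1 + τ * a) := by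
      apply aux_gamma_le_two_mul
      · have := mul_nonneg hρ hann; linarith
      · have := mul_le_mul_of_nonneg_right hρτ hann; linarith
    have e2 : Real.Gamma (1 + σ * b) ≤ 2 * Real.Gamma (1 + τ * b) := by
      apply aux_gamma_le_two_mul
      · have := mul_nonneg hσ hbnn; linarith
      · have := mul_le_mul_of_nonneg_right hστ hbnn; linarith
    have e3 : Real.Gamma (1 + τ * a) * Real.Gamma (1 + τ * b) ≤
        Real.Gamma (1 + τ * a + τ * b) := by
      have := aux_gamma_supermult (mul_nonneg hτ hann) (mul_nonneg hτ hbnn)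
      linarith
    have e4 : Real.Gamma (1 + τ * a + τ * b) ≤ 2 * Real.Gamma (1 + τ * j) := by
      apply aux_gamma_le_two_mul
      · have h1 := mul_nonneg hτ hann
        have h2 := mul_nonneg hτ hbnn
        linarith
      · have := mul_le_mul_of_nonneg_left hab' hτ
        have hexp : τ * ((a:ℝ) + b) = τ * a + τ * b := mul_add τ _ _
        linarith
    have p1 : 0 < Real.Gamma (1 + ρ * a) := Real.Gamma_pos_of_pos (by positivity)
    have p2 : 0 < Real.Gamma (1 + σ * b) := Real.Gamma_pos_of_pos (by positivity)
    have p3 : 0 < Real.Gamma (1 + τ * a) := Real.Gamma_pos_of_pos (by positivity)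
    have p4 : 0 < Real.Gamma (1 + τ * b) := Real.Gamma_pos_of_pos (by positivity)
    rw [hGρa, hGσb, hGτj]
    calc Real.Gamma (1 + ρ * a) * Real.Gamma (1 + σ * b)
        ≤ (2 * Real.Gamma (1 + τ * a)) * (2 * Real.Gamma (1 + τ * b)) :=
          mul_le_mul e1 e2 (le_of_lt p2) (by positivity)
      _ = 4 * (Real.Gamma (1 + τ * a) * Real.Gamma (1 + τ * b)) := by ring
      _ ≤ 4 * Real.Gamma (1 + τ * a + τ * b) := by linarith
      _ ≤ 4 * (2 * Real.Gamma (1 + τ * j)) := by linarith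
      _ = 8 * Real.Gamma (1 + τ * j) := by ring
  · -- σ < 0
    have hτρ : τ = ρ := max_eq_left (le_of_lt (lt_of_lt_of_le hσ hρ))
    have hGσb : GammaS σ b = (Real.Gamma (1 - σ * b))⁻¹ := by
      unfold GammaS; rw [if_neg (not_le.mpr hσ)]
    have hb2 : GammaS σ b ≤ 2 := by
      rw [hGσb]
      have h1 : (1/2 : ℝ) ≤ Real.Gamma (1 - σ * b) := by
        apply aux_half_le_gamma
        nlinarith
      have h0 : 0 < Real.Gamma (1 - σ * b) := by linarith
      rw [inv_le_comm₀ h0 (by norm_num)]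
      linarith
    have e1 : Real.Gamma (1 + ρ * a) ≤ 2 * Real.Gamma (1 + τ * j) := by
      apply aux_gamma_le_two_mul
      · have := mul_nonneg hρ hann; linarith
      · rw [hτρ]
        have := mul_le_mul_of_nonneg_left haj hρ
        linarith
    have p1 : 0 < Real.Gamma (1 + ρ * a) := Real.Gamma_pos_of_pos (by positivity)
    have pσ : 0 < GammaS σ b := GammaS_pos σ b
    rw [hGρa, hGτj]
    calc Real.Gamma (1 + ρ * a) * GammaS σ b
        ≤ (2 * Real.Gamma (1 + τ * j)) * 2 :=
          mul_le_mul e1 hb2 (le_of_lt pσ) (by positivity)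
      _ ≤ 8 * Real.Gamma (1 + τ * j) := by linarith

end Aux

/-- Gevrey estimate for the coefficients of the formal solution
`v̂ = Σ_j (t^j/m₁(j)) Σ_{k=β-1}^{j-1} C(k,β-1) L^{k-β+1} h_{j-k-1}`:
under the stated growth hypotheses on `m₁`, the `h_j` and the iterates `L^k h_j`,
the coefficients `v_j` satisfy `‖v_j‖ ≤ A'' B''^j Γ_{max{ρ,σ}}(j)`. -/
theorem gevrey_estimate_formal_solution
    {E : Type*} [NormedAddCommGroup E] [NormedSpace ℂ E]
    (m₁ : ℕ → ℂ) (s₁ t₁ σ ρ : ℝ) (hρ : 0 ≤ ρ)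
    (c C : ℝ) (hc : 0 < c) (hC : 0 < C)
    (hm : ∀ j, c ^ j * GammaS (s₁ + t₁) j ≤ ‖m₁ j‖ ∧ ‖m₁ j‖ ≤ C ^ j * GammaS (s₁ + t₁) j)
    (L : E →ₗ[ℂ] E) (β : ℕ) (hβ : 1 ≤ β) (h : ℕ → E)
    (A B : ℝ) (hA : 0 < A) (hB : 0 < B) (hh : ∀ j, ‖h j‖ ≤ A * B ^ j * GammaS σ j)
    (A' B' : ℝ) (hA' : 0 < A') (hB' : 0 < B')
    (hL : ∀ k j, ‖(L ^ k) (h j)‖ ≤ A' * B' ^ (j + k) * GammaS ρ k * GammaS σ j) :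
    ∃ A'' B'' : ℝ, 0 < A'' ∧ 0 < B'' ∧ ∀ j,
      ‖∑ k ∈ Finset.Ico (β - 1) j,
          (k.choose (β - 1) : ℂ) • (L ^ (k + 1 - β)) (h (j - k - 1))‖
        ≤ A'' * B'' ^ j * GammaS (max ρ σ) j := by
  set Bm := max B' 1 with hBm
  have hBm1 : 1 ≤ Bm := le_max_right _ _
  have hBmpos : 0 < Bm := by linarith
  refine ⟨8 * A', 4 * Bm, by positivity, by positivity, fun j => ?_⟩
  set τ := max ρ σ with hτdef
  have hGpos : 0 < GammaS τ j := GammaS_pos τ j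
  -- bound each term
  have hterm : ∀ k ∈ Finset.Ico (β - 1) j,
      ‖(k.choose (β - 1) : ℂ) • (L ^ (k + 1 - β)) (h (j - k - 1))‖ ≤
        (2:ℝ) ^ j * (A' * Bm ^ j * (8 * GammaS τ j)) := by
    intro k hk
    rw [Finset.mem_Ico] at hk
    obtain ⟨hk1, hk2⟩ := hk
    have hkβ : β ≤ k + 1 := by omega
    rw [norm_smul]
    have hnc : ‖(k.choose (β - 1) : ℂ)‖ = (k.choose (β - 1) : ℝ) := by
      simp
    rw [hnc]
    have hch : (k.choose (β - 1) : ℝ) ≤ (2:ℝ) ^ j := by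
      have h1 : k.choose (β - 1) ≤ 2 ^ k := aux_choose_le_two_pow k (β - 1)
      have h2 : (2:ℕ) ^ k ≤ 2 ^ j := Nat.pow_le_pow_right (by norm_num) (le_of_lt hk2)
      calc (k.choose (β - 1) : ℝ) ≤ ((2:ℕ) ^ j : ℕ) := by exact_mod_cast le_trans h1 h2
        _ = (2:ℝ) ^ j := by push_cast; ring
    have hLk := hL (k + 1 - β) (j - k - 1)
    have hBpow : B' ^ ((j - k - 1) + (k + 1 - β)) ≤ Bm ^ j := by
      calc B' ^ ((j - k - 1) + (k + 1 - β)) ≤ Bm ^ ((j - k - 1) + (k + 1 - β)) := by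
            apply pow_le_pow_left₀ (le_of_lt hB') (le_max_left _ _)
        _ ≤ Bm ^ j := pow_le_pow_right₀ hBm1 (by omega)
    have hgam : GammaS ρ (k + 1 - β) * GammaS σ (j - k - 1) ≤ 8 * GammaS τ j :=
      aux_key hρ (k + 1 - β) (j - k - 1) j (by omega) (by omega)
    have hpρ : 0 < GammaS ρ (k + 1 - β) := GammaS_pos _ _
    have hpσ : 0 < GammaS σ (j - k - 1) := GammaS_pos _ _
    have hnorm : ‖(L ^ (k + 1 - β)) (h (j - k - 1))‖ ≤ A' * Bm ^ j * (8 * GammaS τ j) := by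
      calc ‖(L ^ (k + 1 - β)) (h (j - k - 1))‖
          ≤ A' * B' ^ ((j - k - 1) + (k + 1 - β)) * GammaS ρ (k + 1 - β) *
            GammaS σ (j - k - 1) := hLk
        _ ≤ A' * Bm ^ j * (8 * GammaS τ j) := by
            have hB0 : (0:ℝ) < B' ^ ((j - k - 1) + (k + 1 - β)) := by positivity
            have := mul_le_mul_of_nonneg_left hgam (by positivity :
              (0:ℝ) ≤ A' * B' ^ ((j - k - 1) + (k + 1 - β)))
            calc A' * B' ^ ((j - k - 1) + (k + 1 - β)) * GammaS ρ (k + 1 - β) *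
                GammaS σ (j - k - 1)
                = A' * B' ^ ((j - k - 1) + (k + 1 - β)) *
                  (GammaS ρ (k + 1 - β) * GammaS σ (j - k - 1)) := by ring
              _ ≤ A' * B' ^ ((j - k - 1) + (k + 1 - β)) * (8 * GammaS τ j) := this
              _ ≤ A' * Bm ^ j * (8 * GammaS τ j) := by
                  apply mul_le_mul_of_nonneg_right _ (by positivity)
                  exact mul_le_mul_of_nonneg_left hBpow (le_of_lt hA')
    exact mul_le_mul hch hnorm (norm_nonneg _) (by positivity)
  -- sum
  have hcard : ((Finset.Ico (β - 1) j).card : ℝ) ≤ (2:ℝ) ^ j := by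
    rw [Nat.card_Ico]
    have h2 : j < 2 ^ j := Nat.lt_two_pow_self
    have h3 : j - (β - 1) ≤ 2 ^ j := by omega
    exact_mod_cast h3
  calc ‖∑ k ∈ Finset.Ico (β - 1) j,
        (k.choose (β - 1) : ℂ) • (L ^ (k + 1 - β)) (h (j - k - 1))‖
      ≤ ∑ k ∈ Finset.Ico (β - 1) j,
        ‖(k.choose (β - 1) : ℂ) • (L ^ (k + 1 - β)) (h (j - k - 1))‖ :=
        norm_sum_le _ _
    _ ≤ ∑ _k ∈ Finset.Ico (β - 1) j, (2:ℝ) ^ j * (A' * Bm ^ j * (8 * GammaS τ j)) :=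
        Finset.sum_le_sum hterm
    _ = ((Finset.Ico (β - 1) j).card : ℝ) * ((2:ℝ) ^ j * (A' * Bm ^ j * (8 * GammaS τ j))) := by
        rw [Finset.sum_const, nsmul_eq_mul]
    _ ≤ (2:ℝ) ^ j * ((2:ℝ) ^ j * (A' * Bm ^ j * (8 * GammaS τ j))) := by
        apply mul_le_mul_of_nonneg_right hcard (by positivity)
    _ = 8 * A' * (4 * Bm) ^ j * GammaS τ j := by
        have h4 : (4:ℝ) ^ j = 2 ^ j * 2 ^ j := by rw [← mul_pow]; norm_num
        rw [mul_pow, h4]; ring
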